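/- Let K be a Hilbert space and let Q ⊆ B ⊆ K be linear subspaces (not necessarily closed). If Q has finite codimension in B and B is dense in K, then there exists a finite-dimensional subspace D of K such that K is the orthogonal direct sum of the closure of Q and D. -/

import Mathlib

noncomputable section

open MvPolynomial

/-- Polynomials in two variables `z, w` over `ℂ`. -/
abbrev CPoly2 : Type := MvPolynomial (Fin 2) ℂ

/-- Evaluation of a two-variable polynomial at `(z, w)`. -/
def pevalAt (p : CPoly2) (z w : ℂ) : ℂ := eval ![z, w] p

/-- The zero set `Z(p) ⊆ ℂ²`. -/
def zeroSet (p : CPoly2) : Set (ℂ × ℂ) := {x | pevalAt p x.1 x.2 = 0}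

/-- The open bidisk `𝔻²`. -/
def biDisk : Set (ℂ × ℂ) := {x | ‖x.1‖ < 1 ∧ ‖x.2‖ < 1}

/-- `𝔙(p) = Z(p) ∩ 𝔻²`. -/
def distVar (p : CPoly2) : Set (ℂ × ℂ) := zeroSet p ∩ biDisk

/-- A polynomial is inner toral if its zero set lies in `𝔻² ∪ 𝕋² ∪ 𝔼²`. -/
def InnerToral (p : CPoly2) : Prop :=
  ∀ z w : ℂ, pevalAt p z w = 0 →
    (‖z‖ < 1 ∧ ‖w‖ < 1) ∨
    (‖z‖ = 1 ∧ ‖w‖ = 1) ∨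
    (1 < ‖z‖ ∧ 1 < ‖w‖)

/-- `p` and `q` are relatively prime: no non-constant polynomial divides both. -/
def RelPrime (p q : CPoly2) : Prop :=
  ∀ d : CPoly2, d ∣ p → d ∣ q → d.totalDegree = 0

/-- `p` is square free: the square of a non-constant polynomial never divides `p`. -/
def SqFree (p : CPoly2) : Prop :=
  ∀ d : CPoly2, 0 < d.totalDegree → ¬ d * d ∣ p

/-- `(λ, μ)` is a regular point for `p`: `p(λ,μ) = 0` and `∇p(λ,μ) ≠ 0`. -/
def IsRegularPoint (p : CPoly2) (x : ℂ × ℂ) : Prop :=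
  pevalAt p x.1 x.2 = 0 ∧
    (eval ![x.1, x.2] (pderiv (0 : Fin 2) p) ≠ 0 ∨
     eval ![x.1, x.2] (pderiv (1 : Fin 2) p) ≠ 0)

/-- The one-variable polynomial `p_λ(w) = p(λ, w)`. -/
def pSlice (p : CPoly2) (lam : ℂ) : Polynomial ℂ :=
  MvPolynomial.aeval ![Polynomial.C lam, Polynomial.X] p

section Ops

variable {H : Type*} [NormedAddCommGroup H] [NormedSpace ℂ H]

/-- For `q(z,w) = Σ c_{ij} z^i w^j`, `polyOp q S T = q(S,T) = Σ c_{ij} S^i T^j`. -/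
def polyOp (q : CPoly2) (S T : H →L[ℂ] H) : H →L[ℂ] H :=
  ∑ m ∈ q.support, q.coeff m • (S ^ (m 0) * T ^ (m 1))

/-- A pure isometry: an isometry with `⋂ₙ Vⁿ(H) = {0}`. -/
def IsPureIsometry (S : H →L[ℂ] H) : Prop :=
  (∀ x : H, ‖S x‖ = ‖x‖) ∧ (⋂ n : ℕ, Set.range (⇑(S ^ (n + 1)))) = ({0} : Set H)

/-- A pure `p`-isopair: a commuting pair of pure isometries annihilated by `p`. -/
def IsPureIsopair (p : CPoly2) (S T : H →L[ℂ] H) : Prop :=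
  Commute S T ∧ IsPureIsometry S ∧ IsPureIsometry T ∧ polyOp p S T = 0

/-- The set `{Σ_j q_j(S,T) f_j : q_j ∈ ℂ[z,w]}`. -/
def cyclicSet (S T : H →L[ℂ] H) {k : ℕ} (f : Fin k → H) : Set H :=
  {x | ∃ q : Fin k → CPoly2, x = ∑ j, polyOp (q j) S T (f j)}

/-- `(S,T)` is `k`-cyclic: some `f_1, …, f_k` have `closure {Σ q_j(S,T) f_j} = H`. -/
def IsKCyclic (S T : H →L[ℂ] H) (k : ℕ) : Prop :=
  ∃ f : Fin k → H, closure (cyclicSet S T f) = Set.univ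

/-- `(S,T)` is at most nearly `k`-cyclic: some `f_1, …, f_k` have
`closure {Σ q_j(S,T) f_j}` of finite codimension in `H`. -/
def AtMostNearlyKCyclic (S T : H →L[ℂ] H) (k : ℕ) : Prop :=
  ∃ f : Fin k → H,
    FiniteDimensional ℂ (H ⧸ (Submodule.span ℂ (cyclicSet S T f)).topologicalClosure)

/-- `(S,T)` is nearly `k`-cyclic: at most nearly `k`-cyclic but not `k'` for `k' < k`. -/
def NearlyKCyclic (S T : H →L[ℂ] H) (k : ℕ) : Prop :=
  AtMostNearlyKCyclic S T k ∧ ∀ k' < k, ¬ AtMostNearlyKCyclic S T k'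

/-- Restriction of a continuous linear operator to an invariant subspace. -/
def clmRestrict (S : H →L[ℂ] H) (E : Submodule ℂ H) (h : ∀ x ∈ E, S x ∈ E) : E →L[ℂ] E :=
  { toLinearMap := (S : H →ₗ[ℂ] H).restrict h
    cont := by exact Continuous.subtype_mk (S.continuous.comp continuous_subtype_val) _ }

end Ops

/-- Unitary equivalence of pairs: a unitary `U` with `U S₁ = S₂ U` and `U T₁ = T₂ U`. -/
def UnitarilyEquivPairs {H1 H2 : Type*} [NormedAddCommGroup H1] [NormedSpace ℂ H1]
    [NormedAddCommGroup H2] [NormedSpace ℂ H2]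
    (S1 T1 : H1 →L[ℂ] H1) (S2 T2 : H2 →L[ℂ] H2) : Prop :=
  ∃ U : H1 ≃ₗᵢ[ℂ] H2, (∀ x, U (S1 x) = S2 (U x)) ∧ (∀ x, U (T1 x) = T2 (U x))

section Hilbert

variable {H : Type*} [NormedAddCommGroup H] [InnerProductSpace ℂ H] [CompleteSpace H]

/-- The multiplicity of an isometry: `dim ker V*`. -/
def multiplicity' (S : H →L[ℂ] H) : Cardinal :=
  Module.rank ℂ (LinearMap.ker ((ContinuousLinearMap.adjoint S : H →ₗ[ℂ] H)))

/-- Finite bimultiplicity: both `mult S` and `mult T` are finite. -/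
def FiniteBimult (S T : H →L[ℂ] H) : Prop :=
  multiplicity' S < Cardinal.aleph0 ∧ multiplicity' T < Cardinal.aleph0

/-- `dim (ker (S - λ)* ∩ ker (T - μ)*)`. -/
def jointKerDim (S T : H →L[ℂ] H) (lam mu : ℂ) : Cardinal :=
  Module.rank ℂ
    ↥(LinearMap.ker ((ContinuousLinearMap.adjoint (S - lam • 1) : H →ₗ[ℂ] H)) ⊓
      LinearMap.ker ((ContinuousLinearMap.adjoint (T - mu • 1) : H →ₗ[ℂ] H)))

/-- `(S,T)` has rank `α`: for each `j` and every regular point `(λ,μ)` of `p` in `𝔙(p_j)`,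
`dim (ker (S-λ)* ∩ ker (T-μ)*) = α_j`. -/
def HasRank (p : CPoly2) {s : ℕ} (ps : Fin s → CPoly2) (S T : H →L[ℂ] H)
    (α : Fin s → ℕ) : Prop :=
  ∀ j : Fin s, ∀ x : ℂ × ℂ, x ∈ distVar (ps j) → IsRegularPoint p x →
    jointKerDim S T x.1 x.2 = (α j : Cardinal)

/-- Rank for an isopair attached to a single irreducible polynomial. -/
def HasRankIrred (p : CPoly2) (S T : H →L[ℂ] H) (a : ℕ) : Prop :=
  ∀ x : ℂ × ℂ, x ∈ distVar p → IsRegularPoint p x →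
    jointKerDim S T x.1 x.2 = (a : Cardinal)

end Hilbert

/-- A pair of operators acting on some complex Hilbert space. -/
structure HilbertPair where
  space : Type*
  [nacg : NormedAddCommGroup space]
  [ips : InnerProductSpace ℂ space]
  [cs : CompleteSpace space]
  S : space →L[ℂ] space
  T : space →L[ℂ] space

attribute [instance] HilbertPair.nacg HilbertPair.ips HilbertPair.cs
/-- if `Q ⊆ B ⊆ K` with `Q` of finite codimension in `B` and `B` dense
in `K`, then `K` is the orthogonal direct sum of the closure of `Q` and a finite
dimensional subspace `D`. -/
theorem statement17 {K : Type*} [NormedAddCommGroup K] [InnerProductSpace ℂ K]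
    [CompleteSpace K] (Q B : Submodule ℂ K) (hQB : Q ≤ B)
    (hcodim : FiniteDimensional ℂ (↥B ⧸ Q.comap B.subtype))
    (hdense : Dense (B : Set K)) :
    ∃ D : Submodule ℂ K, FiniteDimensional ℂ D ∧
      (∀ x ∈ Q.topologicalClosure, ∀ y ∈ D, (inner ℂ x y : ℂ) = 0) ∧
      Q.topologicalClosure ⊔ D = ⊤ ∧ Q.topologicalClosure ⊓ D = ⊥ := by
  
  classical
  set Qc := Q.topologicalClosure with hQc
  have hQcClosed : IsClosed (Qc : Set K) := Submodule.isClosed_topologicalClosure Q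
  haveI : CompleteSpace Qc := hQcClosed.completeSpace_coe
  set D := Qcᗮ with hD
  -- choose finite generators of the quotient B / Q
  set Q' := Q.comap B.subtype with hQ'
  obtain ⟨n, s, hs⟩ := Module.Finite.exists_fin (R := ℂ) (M := ↥B ⧸ Q')
  choose g hg using fun i => Submodule.Quotient.mk_surjective Q' (s i)
  set F : Submodule ℂ K := Submodule.span ℂ (Set.range fun i => ((g i : B) : K)) with hF
  haveI : FiniteDimensional ℂ F := by
    apply FiniteDimensional.span_of_finite
    exact Set.finite_range _
  -- B ≤ Q ⊔ F
  have hBQF : B ≤ Q ⊔ F := by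
    have hmap : Submodule.map Q'.mkQ (Submodule.span ℂ (Set.range g)) = ⊤ := by
      rw [Submodule.map_span, ← Set.range_comp]
      have : (Q'.mkQ ∘ g) = s := funext fun i => hg i
      rw [this, hs]
    have hsup : Submodule.span ℂ (Set.range g) ⊔ Q' = ⊤ := by
      rw [sup_comm]; exact (Submodule.map_mkQ_eq_top _ _).1 hmap
    intro x hx
    have hxtop : (⟨x, hx⟩ : B) ∈ Submodule.span ℂ (Set.range g) ⊔ Q' := by
      rw [hsup]; trivial
    obtain ⟨a, ha, b, hb, hab⟩ := Submodule.mem_sup.1 hxtop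
    have : x = (b : K) + (a : K) := by
      have := congrArg (Subtype.val) hab
      simpa [add_comm] using this.symm
    rw [this]
    refine Submodule.add_mem_sup hb ?_
    have : (a : K) ∈ Submodule.map B.subtype (Submodule.span ℂ (Set.range g)) :=
      ⟨a, ha, rfl⟩
    rwa [Submodule.map_span, ← Set.range_comp] at this
  -- orthogonal projection onto D
  haveI : Qc.HasOrthogonalProjection := inferInstance
  set P : K →L[ℂ] D := Submodule.orthogonalProjectionOnto D with hP
  have hDperp : Dᗮ = Qc := Submodule.orthogonal_orthogonal Qc
  have hPQ : ∀ x ∈ Q, P x = 0 := by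
    intro x hx
    exact Submodule.orthogonalProjectionOnto_apply_of_mem_orthogonal
      (by rw [hDperp]; exact Q.le_topologicalClosure hx)
  -- the image M of Q ⊔ F under P is finite dimensional
  set M : Submodule ℂ D := Submodule.map (P : K →ₗ[ℂ] D) (Q ⊔ F) with hM
  haveI : FiniteDimensional ℂ M := by
    have : M = Submodule.map (P : K →ₗ[ℂ] D) F := by
      rw [hM, Submodule.map_sup]
      have : Submodule.map (P : K →ₗ[ℂ] D) Q = ⊥ := by
        rw [Submodule.eq_bot_iff]
        rintro y ⟨x, hx, rfl⟩
        exact hPQ x hx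
      rw [this, bot_sup_eq]
    rw [this]
    infer_instance
  -- M is dense in D, hence M = ⊤
  have hMtop : M = ⊤ := by
    have hMclosed : IsClosed (M : Set D) := Submodule.closed_of_finiteDimensional M
    rw [Submodule.eq_top_iff']
    intro y
    have hy : (y : K) ∈ closure (B : Set K) := hdense _
    have hsub : (B : Set K) ⊆ P ⁻¹' (M : Set D) := by
      intro x hx
      exact Set.mem_preimage.2 ⟨x, hBQF hx, rfl⟩
    have hcl : closure (B : Set K) ⊆ P ⁻¹' (M : Set D) :=
      closure_minimal hsub (hMclosed.preimage P.continuous)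
    have : P (y : K) ∈ M := hcl hy
    rwa [Submodule.orthogonalProjectionOnto_mem_subspace_eq_self y] at this
  haveI hDfin : FiniteDimensional ℂ D := by
    have : FiniteDimensional ℂ (⊤ : Submodule ℂ D) := hMtop ▸ inferInstance
    exact (Submodule.topEquiv (R := ℂ) (M := D)).finiteDimensional
  have hcompl : IsCompl Qc D := Submodule.isCompl_orthogonal_of_hasOrthogonalProjection
  refine ⟨D, hDfin, ?_, ?_, ?_⟩
  · intro x hx y hy
    exact hy x hx
  · exact codisjoint_iff.1 hcompl.codisjoint
  · exact disjoint_iff.1 hcompl.disjoint
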